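/- arXiv:1505.03368 — 2 statements merged into one kernel-verified Lean document; each statement's English description precedes it below -/
import Mathlib

section
/- The M'₄ interpolation kernel satisfies the partition of unity property on the integer lattice: for every x ∈ ℝ, the sum over all integers k of M'₄(x - k) equals 1. -/
noncomputable def M4 (ρ : ℝ) : ℝ :=
  if |ρ| < 1 then 1 - (5 / 2) * ρ ^ 2 + (3 / 2) * |ρ| ^ 3
  else if |ρ| < 2 then (1 / 2) * (2 - |ρ|) ^ 2 * (1 - |ρ|)
  else 0

lemma M4_zero {ρ : ℝ} (h : 2 ≤ |ρ|) : M4 ρ = 0 := by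
  unfold M4
  rw [if_neg (by linarith [abs_nonneg ρ]), if_neg (by linarith)]

lemma M4_a {ρ : ℝ} (h0 : 0 ≤ ρ) (h1 : ρ < 1) :
    M4 ρ = 1 - (5 / 2) * ρ ^ 2 + (3 / 2) * ρ ^ 3 := by
  unfold M4
  rw [abs_of_nonneg h0, if_pos h1]

lemma M4_b {ρ : ℝ} (h0 : 1 ≤ ρ) (h1 : ρ < 2) :
    M4 ρ = (1 / 2) * (2 - ρ) ^ 2 * (1 - ρ) := by
  unfold M4
  rw [abs_of_nonneg (by linarith), if_neg (by linarith), if_pos h1]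

lemma M4_c {ρ : ℝ} (h0 : -1 ≤ ρ) (h1 : ρ ≤ 0) :
    M4 ρ = 1 - (5 / 2) * ρ ^ 2 - (3 / 2) * ρ ^ 3 := by
  unfold M4
  rw [abs_of_nonpos h1]
  rcases lt_or_eq_of_le h0 with h | h
  · rw [if_pos (by linarith)]; ring
  · rw [if_neg (by rw [← h]; norm_num), if_pos (by rw [← h]; norm_num)]
    rw [← h]; norm_num

lemma M4_d {ρ : ℝ} (h0 : -2 ≤ ρ) (h1 : ρ ≤ -1) :
    M4 ρ = (1 / 2) * (2 + ρ) ^ 2 * (1 + ρ) := by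
  unfold M4
  rw [abs_of_nonpos (by linarith)]
  rcases lt_or_eq_of_le h0 with h | h
  · rw [if_neg (by linarith), if_pos (by linarith)]; ring
  · rw [if_neg (by rw [← h]; norm_num), if_neg (by rw [← h]; norm_num)]
    rw [← h]; norm_num

/-- The M'₄ kernel satisfies the partition of unity property on the integer lattice. -/
theorem M4_partition_of_unity (x : ℝ) : ∑' k : ℤ, M4 (x - (k : ℝ)) = 1 := by
  set n := ⌊x⌋ with hn
  have ht0 : (0:ℝ) ≤ x - n := by
    have := Int.floor_le x; linarith
  have ht1 : x - n < 1 := by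
    have := Int.lt_floor_add_one x; linarith
  have hzero : ∀ k ∉ ({n - 1, n, n + 1, n + 2} : Finset ℤ), M4 (x - (k : ℝ)) = 0 := by
    intro k hk
    simp only [Finset.mem_insert, Finset.mem_singleton] at hk
    push_neg at hk
    have hk' : k ≤ n - 2 ∨ n + 3 ≤ k := by omega
    apply M4_zero
    rcases hk' with h | h
    · have : (k : ℝ) ≤ (n : ℝ) - 2 := by
        have : ((k:ℤ):ℝ) ≤ ((n - 2 : ℤ):ℝ) := Int.cast_le.2 h
        push_cast at this; linarith
      rw [abs_of_nonneg (by linarith)]; linarith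
    · have : (n : ℝ) + 3 ≤ (k : ℝ) := by exact_mod_cast h
      rw [abs_of_nonpos (by linarith)]; linarith
  rw [tsum_eq_sum hzero]
  have e1 : M4 (x - ((n - 1 : ℤ) : ℝ)) = (1 / 2) * (2 - (x - n + 1)) ^ 2 * (1 - (x - n + 1)) := by
    push_cast
    rw [show x - ((n:ℝ) - 1) = (x - n) + 1 by ring, M4_b (by linarith) (by linarith)]
  have e2 : M4 (x - ((n : ℤ) : ℝ)) = 1 - (5 / 2) * (x - n) ^ 2 + (3 / 2) * (x - n) ^ 3 :=
    M4_a ht0 ht1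
  have e3 : M4 (x - ((n + 1 : ℤ) : ℝ)) =
      1 - (5 / 2) * (x - n - 1) ^ 2 - (3 / 2) * (x - n - 1) ^ 3 := by
    push_cast
    rw [show x - ((n:ℝ) + 1) = (x - n) - 1 by ring, M4_c (by linarith) (by linarith)]
  have e4 : M4 (x - ((n + 2 : ℤ) : ℝ)) =
      (1 / 2) * (2 + (x - n - 2)) ^ 2 * (1 + (x - n - 2)) := by
    push_cast
    rw [show x - ((n:ℝ) + 2) = (x - n) - 2 by ring, M4_d (by linarith) (by linarith)]
  rw [Finset.sum_insert (by simp only [Finset.mem_insert, Finset.mem_singleton]; omega), Finset.sum_insert (by simp only [Finset.mem_insert, Finset.mem_singleton]; omega),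
    Finset.sum_insert (by simp only [Finset.mem_insert, Finset.mem_singleton]; omega), Finset.sum_singleton]
  rw [e1, e2, e3, e4]
  ring
end

section
/- The M'₄ kernel conserves the first moment on the integer lattice: for every x ∈ ℝ, the sum over all integers k of k · M'₄(x - k) equals x. -/
/-- The M'₄ kernel conserves the first moment on the integer lattice. -/
theorem M4_first_moment (x : ℝ) : ∑' k : ℤ, (k : ℝ) * M4 (x - (k : ℝ)) = x := by
  set n : ℤ := ⌊x⌋ with hn
  have ht0 : (0:ℝ) ≤ x - n := by
    have := Int.floor_le x; linarith
  have ht1 : x - n < 1 := by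
    have := Int.lt_floor_add_one x; linarith
  have hs : ∀ k : ℤ, k ∉ ({n-1, n, n+1, n+2} : Finset ℤ) → (k:ℝ) * M4 (x - k) = 0 := by
    intro k hk
    simp only [Finset.mem_insert, Finset.mem_singleton] at hk
    push_neg at hk
    have h2 : (2:ℝ) ≤ |x - k| := by
      have hc : k ≤ n - 2 ∨ n + 3 ≤ k := by omega
      rcases hc with h | h
      · have : (k:ℝ) ≤ (n:ℝ) - 2 := by exact_mod_cast h
        rw [abs_of_nonneg (by linarith)]; linarith
      · have : (n:ℝ) + 3 ≤ (k:ℝ) := by exact_mod_cast h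
        rw [abs_of_nonpos (by linarith)]; linarith
    have hM : M4 (x - k) = 0 := by
      unfold M4
      rw [if_neg (by linarith), if_neg (by linarith)]
    rw [hM, mul_zero]
  rw [tsum_eq_sum hs]
  have e1 : x - ((n - 1 : ℤ) : ℝ) = (x - n) + 1 := by push_cast; ring
  have e2 : x - ((n + 1 : ℤ) : ℝ) = (x - n) - 1 := by push_cast; ring
  have e3 : x - ((n + 2 : ℤ) : ℝ) = (x - n) - 2 := by push_cast; ring
  have h1 : M4 ((x - n) + 1) = (1/2) * (1 - (x - n))^2 * (-(x - n)) := by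
    unfold M4
    rw [abs_of_nonneg (by linarith)]
    rw [if_neg (by linarith), if_pos (by linarith)]
    ring
  have h2 : M4 (x - n) = 1 - (5/2) * (x - n)^2 + (3/2) * (x - n)^3 := by
    unfold M4
    rw [abs_of_nonneg ht0, if_pos ht1]
  have h3 : M4 ((x - n) - 1) = 1 - (5/2) * (1 - (x - n))^2 + (3/2) * (1 - (x - n))^3 := by
    unfold M4
    rw [abs_of_nonpos (by linarith)]
    rcases eq_or_lt_of_le ht0 with h | h
    · rw [if_neg (by linarith), if_pos (by linarith)]
      rw [← h]; ring
    · rw [if_pos (by rw [neg_sub]; linarith)]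
      ring
  have h4 : M4 ((x - n) - 2) = (1/2) * (x - n)^2 * ((x - n) - 1) := by
    unfold M4
    rw [abs_of_nonpos (by linarith)]
    rcases eq_or_lt_of_le ht0 with h | h
    · rw [if_neg (by linarith), if_neg (by linarith)]
      rw [← h]; ring
    · rw [if_neg (by linarith), if_pos (by rw [neg_sub]; linarith)]
      ring
  have hd1 : n - 1 ∉ ({n, n+1, n+2} : Finset ℤ) := by simp; omega
  have hd2 : n ∉ ({n+1, n+2} : Finset ℤ) := by simp
  have hd3 : n + 1 ∉ ({n+2} : Finset ℤ) := by simp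
  rw [show ({n-1, n, n+1, n+2} : Finset ℤ) = insert (n-1) (insert n (insert (n+1) {n+2})) from rfl]
  rw [Finset.sum_insert hd1, Finset.sum_insert hd2, Finset.sum_insert hd3,
    Finset.sum_singleton]
  rw [e1, e2, e3, h1, h2, h3, h4]
  push_cast
  ring
end
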